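/- Let s be a binary string of length r, and let s' be its (2k+1)-repetition encoding (each bit duplicated 2k+1 consecutive times), of length r(2k+1). Suppose s'' is obtained from s' by at most k edit operations (insertions, deletions, substitutions of single characters). Divide s'' into consecutive blocks of length exactly 2k+1 (the i-th block covering positions (i−1)(2k+1)+1 through i(2k+1), for i = 1,…,r; these positions exist whenever |s''| ≥ r(2k+1) − k and we only consider positions present). Then for each i ≤ r such that the i-th block is fully contained in s'', the majority bit of that block equals s[i]. -/

import Mathlib

/-- A cost function for Levenshtein distance (as in the former Mathlib
`Mathlib/Data/List/EditDistance/Defs.lean`, since removed from Mathlib). -/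
structure Levenshtein.Cost (α β δ : Type*) where
  /-- Cost to delete an element from a list. -/
  delete : α → δ
  /-- Cost to insert an element into a list. -/
  insert : β → δ
  /-- Cost to substitute one element for another in a list. -/
  substitute : α → β → δ

/-- The default cost structure, for which all operations cost `1`. -/
def Levenshtein.defaultCost {α : Type*} [DecidableEq α] : Levenshtein.Cost α α ℕ where
  delete _ := 1
  insert _ := 1
  substitute a b := if a = b then 0 else 1

/-- (Implementation detail for `levenshtein`) -/
def Levenshtein.impl {α β δ : Type*} [AddZeroClass δ] [Min δ]
    (C : Levenshtein.Cost α β δ)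
    (xs : List α) (y : β) (d : {r : List δ // 0 < r.length}) : {r : List δ // 0 < r.length} :=
  let ⟨ds, w⟩ := d
  xs.zip (ds.zip ds.tail) |>.foldr
    (init := ⟨[C.insert y + ds.getLast (List.ne_nil_of_length_pos w)], by simp⟩)
    (fun ⟨x, d₀, d₁⟩ ⟨r, w⟩ =>
      ⟨min (C.delete x + r[0]) (min (C.insert y + d₀) (C.substitute x y + d₁)) :: r, by simp⟩)

/-- `suffixLevenshtein C xs ys` computes the Levenshtein distance
from each suffix of the list `xs` to the list `ys`. -/
def suffixLevenshtein {α β δ : Type*} [AddZeroClass δ] [Min δ]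
    (C : Levenshtein.Cost α β δ) (xs : List α) (ys : List β) :
    {r : List δ // 0 < r.length} :=
  ys.foldr
    (Levenshtein.impl C xs)
    (xs.foldr (init := ⟨[0], by simp⟩)
      (fun a ⟨ds, w⟩ => ⟨(C.delete a + ds[0]) :: ds, by simp⟩))

/-- The Levenshtein distance between two lists, with respect to a cost structure. -/
def levenshtein {α β δ : Type*} [AddZeroClass δ] [Min δ]
    (C : Levenshtein.Cost α β δ) (xs : List α) (ys : List β) : δ :=
  let ⟨r, w⟩ := suffixLevenshtein C xs ys
  r[0]

section LevLemmas
variable {α β δ : Type*} [AddZeroClass δ] [Min δ] (C : Levenshtein.Cost α β δ)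

@[simp] theorem Levenshtein.defaultCost_delete {γ : Type*} [DecidableEq γ] (a : γ) :
    (Levenshtein.defaultCost : Levenshtein.Cost γ γ ℕ).delete a = 1 := rfl
@[simp] theorem Levenshtein.defaultCost_insert {γ : Type*} [DecidableEq γ] (a : γ) :
    (Levenshtein.defaultCost : Levenshtein.Cost γ γ ℕ).insert a = 1 := rfl
@[simp] theorem Levenshtein.defaultCost_substitute {γ : Type*} [DecidableEq γ] (a b : γ) :
    (Levenshtein.defaultCost : Levenshtein.Cost γ γ ℕ).substitute a b = if a = b then 0 else 1 := rfl

theorem levenshtein_eq_get (xs : List α) (ys : List β) :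
    levenshtein C xs ys = (suffixLevenshtein C xs ys).1[0]'(suffixLevenshtein C xs ys).2 := rfl

theorem suffixLevenshtein_cons₂' (xs : List α) (y : β) (ys : List β) :
    suffixLevenshtein C xs (y :: ys) = Levenshtein.impl C xs y (suffixLevenshtein C xs ys) := rfl

theorem impl_cons' (x : α) (xs : List α) (y : β) (d d' : δ) (ds : List δ) (w : 0 < (d :: d' :: ds).length) :
    Levenshtein.impl C (x :: xs) y ⟨d :: d' :: ds, w⟩ =
      ⟨min (C.delete x + (Levenshtein.impl C xs y ⟨d' :: ds, by simp⟩).1[0]'(Levenshtein.impl C xs y ⟨d' :: ds, by simp⟩).2)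
        (min (C.insert y + d) (C.substitute x y + d')) :: (Levenshtein.impl C xs y ⟨d' :: ds, by simp⟩).1, by simp⟩ := rfl

theorem suffixLevenshtein_nil_ex (ys : List β) :
    ∃ v, suffixLevenshtein C ([] : List α) ys = ⟨[v], by simp⟩ := by
  induction ys with
  | nil => exact ⟨0, rfl⟩
  | cons y ys ih =>
    obtain ⟨v, hv⟩ := ih
    exact ⟨C.insert y + v, by rw [suffixLevenshtein_cons₂', hv]; rfl⟩

theorem suffixLevenshtein_cons₁' (x : α) (xs : List α) (ys : List β) :
    (suffixLevenshtein C (x :: xs) ys).1 = levenshtein C (x :: xs) ys :: (suffixLevenshtein C xs ys).1 := by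
  induction ys with
  | nil => rfl
  | cons y ys ih =>
    rcases hS : suffixLevenshtein C xs ys with ⟨_ | ⟨d', ds⟩, w⟩
    · simp at w
    rw [hS] at ih
    have h1 : suffixLevenshtein C (x :: xs) ys = ⟨levenshtein C (x :: xs) ys :: d' :: ds, by simp⟩ :=
      Subtype.ext ih
    have h2 : suffixLevenshtein C xs (y :: ys) = Levenshtein.impl C xs y ⟨d' :: ds, by simp⟩ := by
      rw [suffixLevenshtein_cons₂', hS]
    rw [levenshtein_eq_get]
    simp only [suffixLevenshtein_cons₂' C (x :: xs), h1, impl_cons', h2]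
    rfl

@[simp] theorem levenshtein_nil_nil : levenshtein C ([] : List α) ([] : List β) = 0 := rfl

@[simp] theorem levenshtein_cons_nil (x : α) (xs : List α) :
    levenshtein C (x :: xs) ([] : List β) = C.delete x + levenshtein C xs [] := rfl

@[simp] theorem levenshtein_nil_cons (y : β) (ys : List β) :
    levenshtein C ([] : List α) (y :: ys) = C.insert y + levenshtein C [] ys := by
  obtain ⟨v, hv⟩ := suffixLevenshtein_nil_ex C (α := α) ys
  rw [levenshtein_eq_get, levenshtein_eq_get]
  simp only [suffixLevenshtein_cons₂', hv]
  rfl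

@[simp] theorem levenshtein_cons_cons (x : α) (xs : List α) (y : β) (ys : List β) :
    levenshtein C (x :: xs) (y :: ys) =
      min (C.delete x + levenshtein C xs (y :: ys))
        (min (C.insert y + levenshtein C (x :: xs) ys)
          (C.substitute x y + levenshtein C xs ys)) := by
  rcases hS : suffixLevenshtein C xs ys with ⟨_ | ⟨d', ds⟩, w⟩
  · simp at w
  have ih := suffixLevenshtein_cons₁' C x xs ys
  rw [hS] at ih
  have h1 : suffixLevenshtein C (x :: xs) ys = ⟨levenshtein C (x :: xs) ys :: d' :: ds, by simp⟩ :=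
    Subtype.ext ih
  have h2 : suffixLevenshtein C xs (y :: ys) = Levenshtein.impl C xs y ⟨d' :: ds, by simp⟩ := by
    rw [suffixLevenshtein_cons₂', hS]
  have h4 : levenshtein C xs ys = d' := by
    rw [levenshtein_eq_get]; simp only [hS]; rfl
  rw [levenshtein_eq_get, levenshtein_eq_get C xs (y :: ys), h4]
  simp only [suffixLevenshtein_cons₂' C (x :: xs), h1, impl_cons', h2]
  rfl

end LevLemmas


open Levenshtein
abbrev lev (x y : List Bool) : ℕ := levenshtein Levenshtein.defaultCost x y

lemma lev_nil_right (x : List Bool) : lev x [] = x.length := by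
  induction x with
  | nil => simp [lev]
  | cons a x ih => simp only [lev] at *; rw [levenshtein_cons_nil]; simp [ih]; omega

lemma lev_nil_left (y : List Bool) : lev [] y = y.length := by
  induction y with
  | nil => simp [lev]
  | cons a y ih => simp only [lev] at *; rw [levenshtein_nil_cons]; simp [ih]; omega

lemma lev_insert_le (x : List Bool) (c : Bool) (y : List Bool) :
    lev x (c :: y) ≤ 1 + lev x y := by
  cases x with
  | nil => rw [lev_nil_left, lev_nil_left]; simp
  | cons a x =>
    simp only [lev, levenshtein_cons_cons]
    refine le_trans (min_le_right _ _) (le_trans (min_le_left _ _) ?_)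
    simp

lemma lev_delete_le (a : Bool) (x y : List Bool) :
    lev (a :: x) y ≤ 1 + lev x y := by
  cases y with
  | nil => rw [lev_nil_right, lev_nil_right]; simp
  | cons c y =>
    simp only [lev, levenshtein_cons_cons]
    exact le_trans (min_le_left _ _) (by simp)

lemma lev_subst_le (a : Bool) (x : List Bool) (c : Bool) (y : List Bool) :
    lev (a :: x) (c :: y) ≤ (if a = c then 0 else 1) + lev x y := by
  simp only [lev, levenshtein_cons_cons]
  refine le_trans (min_le_right _ _) (le_trans (min_le_right _ _) ?_)
  simp

lemma lev_cases (a : Bool) (x : List Bool) (c : Bool) (y : List Bool) :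
    lev (a :: x) (c :: y) = 1 + lev x (c :: y) ∨
    lev (a :: x) (c :: y) = 1 + lev (a :: x) y ∨
    lev (a :: x) (c :: y) = (if a = c then 0 else 1) + lev x y := by
  simp only [lev, levenshtein_cons_cons, Levenshtein.defaultCost_delete,
    Levenshtein.defaultCost_insert, Levenshtein.defaultCost_substitute]
  rcases min_choice (1 + levenshtein Levenshtein.defaultCost x (c :: y))
    (min (1 + levenshtein Levenshtein.defaultCost (a :: x) y)
      ((if a = c then 0 else 1) + levenshtein Levenshtein.defaultCost x y)) with h | h
  · left; exact h
  · rw [h]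
    rcases min_choice (1 + levenshtein Levenshtein.defaultCost (a :: x) y)
      ((if a = c then 0 else 1) + levenshtein Levenshtein.defaultCost x y) with h2 | h2
    · right; left; exact h2
    · right; right; exact h2

lemma lev_length (x y : List Bool) :
    x.length ≤ y.length + lev x y ∧ y.length ≤ x.length + lev x y := by
  induction x generalizing y with
  | nil => rw [lev_nil_left]; simp
  | cons a x ihx =>
    induction y with
    | nil => rw [lev_nil_right]; simp
    | cons c y ihy =>
      rcases lev_cases a x c y with h | h | h <;> rw [h]
      · have := ihx (c :: y); simp at *; omega
      · have := ihy; simp at *; omega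
      · have := ihx y; simp at *; split at h <;> omega

lemma lev_count (b : Bool) (x y : List Bool) :
    x.count b ≤ y.count b + lev x y := by
  induction x generalizing y with
  | nil => simp
  | cons a x ihx =>
    induction y with
    | nil =>
      rw [lev_nil_right]
      exact le_trans (List.count_le_length) (by simp)
    | cons c y ihy =>
      rcases lev_cases a x c y with h | h | h <;> rw [h]
      · have h1 := ihx (c :: y)
        have h2 : (a :: x).count b ≤ x.count b + 1 := by
          rw [List.count_cons]; split <;> simp
        omega
      · have h1 := ihy
        have h2 : (c :: y).count b ≥ y.count b := by
          rw [List.count_cons]; split <;> simp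
        omega
      · have h1 := ihx y
        by_cases hac : a = c
        · subst hac
          simp only [if_pos rfl]
          rw [List.count_cons, List.count_cons]
          split <;> omega
        · simp only [if_neg hac]
          have h2 : (a :: x).count b ≤ x.count b + 1 := by
            rw [List.count_cons]; split <;> simp
          have h3 : (c :: y).count b ≥ y.count b := by
            rw [List.count_cons]; split <;> simp
          omega

lemma lev_count_length (b : Bool) (x y : List Bool) :
    x.count b + (y.length - x.length) ≤ y.count b + lev x y := by
  induction x generalizing y with
  | nil => rw [lev_nil_left]; simp
  | cons a x ihx =>
    induction y with
    | nil =>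
      rw [lev_nil_right]
      have := List.count_le_length (a := b) (l := a :: x)
      simp at this ⊢
      omega
    | cons c y ihy =>
      have hcx : (a :: x).count b ≤ x.count b + 1 := by
        rw [List.count_cons]; split <;> simp
      have hcy : y.count b ≤ (c :: y).count b := by
        rw [List.count_cons]; split <;> simp
      rcases lev_cases a x c y with h | h | h <;> rw [h] <;> simp only [List.length_cons]
      · have h1 := ihx (c :: y)
        simp only [List.length_cons] at h1
        omega
      · have h1 := ihy
        simp only [List.length_cons] at h1
        omega
      · have h1 := ihx y
        by_cases hac : a = c
        · subst hac
          simp only [if_pos rfl]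
          rw [List.count_cons, List.count_cons]
          split <;> omega
        · simp only [if_neg hac]
          omega


lemma lev_append_decomp (u v y : List Bool) :
    ∃ y1 y2, y = y1 ++ y2 ∧ lev u y1 + lev v y2 ≤ lev (u ++ v) y := by
  induction u generalizing y with
  | nil => exact ⟨[], y, rfl, by simp⟩
  | cons a u ihu =>
    induction y with
    | nil =>
      refine ⟨[], [], rfl, ?_⟩
      rw [lev_nil_right, lev_nil_right, lev_nil_right]
      simp; omega
    | cons c y ihy =>
      simp only [List.cons_append] at ihy ⊢
      rcases lev_cases a (u ++ v) c y with h | h | h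
      · obtain ⟨y1, y2, heq, hle⟩ := ihu (c :: y)
        refine ⟨y1, y2, heq, ?_⟩
        have := lev_delete_le a u y1
        rw [h]; omega
      · obtain ⟨y1, y2, heq, hle⟩ := ihy
        refine ⟨c :: y1, y2, by rw [heq, List.cons_append], ?_⟩
        have := lev_insert_le (a :: u) c y1
        rw [h]; omega
      · obtain ⟨y1, y2, heq, hle⟩ := ihu y
        refine ⟨c :: y1, y2, by rw [heq, List.cons_append], ?_⟩
        have := lev_subst_le a u c y1
        rw [h]
        by_cases hac : a = c <;> simp only [if_pos, if_neg, hac] at * <;> omega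


lemma slice_sublist (l : List Bool) (a a' m m' : ℕ) (h1 : a' ≤ a) (h2 : a + m ≤ a' + m') :
    ((l.drop a).take m).Sublist ((l.drop a').take m') := by
  have e1 : l.drop a = (l.drop a').drop (a - a') := by
    rw [List.drop_drop]; congr 1; omega
  have e3 : ((l.drop a').drop (a - a')).take m
      = (((l.drop a').take m').drop (a - a')).take m := by
    rw [List.drop_take, List.take_take]; congr 1; omega
  rw [e1, e3]
  exact (List.take_sublist _ _).trans (List.drop_sublist _ _)

lemma flatMap_replicate_length (n : ℕ) (l : List Bool) :
    (l.flatMap (fun b => List.replicate n b)).length = l.length * n := by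
  induction l with
  | nil => simp
  | cons a l ih => simp [List.flatMap_cons, ih]; ring



/-- Repetition code decoding: if `s'` is the `(2k+1)`-repetition encoding of a
binary string `s` of length `r`, and `s''` is within edit distance `k` of `s'`,
then for every block index `i` whose block of length `2k+1` is fully contained
in `s''`, the majority bit of that block equals `s[i]` (i.e. `s[i]` occurs at
least `k+1` times in the block). -/
theorem repetition_code_majority (k r : ℕ) (s : Fin r → Bool) (s'' : List Bool)
    (h : levenshtein Levenshtein.defaultCost
          ((List.ofFn s).flatMap (fun b => List.replicate (2 * k + 1) b)) s'' ≤ k) :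
    ∀ i : Fin r, (i.val + 1) * (2 * k + 1) ≤ s''.length →
      k + 1 ≤ ((s''.drop (i.val * (2 * k + 1))).take (2 * k + 1)).count (s i) := by
  intro i hcontain
  obtain ⟨P, hP⟩ : ∃ P, P = ((List.ofFn s).take i.val).flatMap
      (fun b => List.replicate (2 * k + 1) b) := ⟨_, rfl⟩
  obtain ⟨S, hS⟩ : ∃ S, S = ((List.ofFn s).drop (i.val + 1)).flatMap
      (fun b => List.replicate (2 * k + 1) b) := ⟨_, rfl⟩
  have hsplit : (List.ofFn s).flatMap (fun b => List.replicate (2 * k + 1) b)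
      = P ++ (List.replicate (2 * k + 1) (s i) ++ S) := by
    rw [hP, hS]
    conv_lhs => rw [← List.take_append_drop i.val (List.ofFn s)]
    rw [List.flatMap_append]
    congr 1
    rw [List.drop_eq_getElem_cons (by simpa using i.isLt), List.flatMap_cons]
    congr 1
    simp [List.getElem_ofFn]
  have hlenP : P.length = i.val * (2 * k + 1) := by
    rw [hP, flatMap_replicate_length, List.length_take, List.length_ofFn,
      Nat.min_eq_left i.isLt.le]
  rw [hsplit] at h
  rw [← hlenP]
  clear hcontain hP hS
  obtain ⟨y1, z, heq, hle1⟩ := lev_append_decomp P (List.replicate (2 * k + 1) (s i) ++ S) s''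
  obtain ⟨y2, y3, heqz, hle2⟩ := lev_append_decomp (List.replicate (2 * k + 1) (s i)) S z
  subst heqz
  subst heq
  have h' : lev (P ++ (List.replicate (2 * k + 1) (s i) ++ S)) (y1 ++ (y2 ++ y3)) ≤ k := h
  have hd : lev P y1 + lev (List.replicate (2 * k + 1) (s i)) y2 + lev S y3 ≤ k := by omega
  obtain ⟨hlen1a, hlen1b⟩ := lev_length P y1
  obtain ⟨hlen2a, hlen2b⟩ := lev_length (List.replicate (2 * k + 1) (s i)) y2
  rw [List.length_replicate] at hlen2a hlen2b
  have hc2 := lev_count_length (s i) (List.replicate (2 * k + 1) (s i)) y2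
  rw [List.count_replicate_self, List.length_replicate] at hc2
  -- y2 as a slice of the whole string
  have hy2eq : y2 = ((y1 ++ (y2 ++ y3)).drop y1.length).take y2.length := by
    rw [List.drop_left, List.take_left]
  have hM : (y2.drop (P.length - y1.length)).take
        ((P.length + (2 * k + 1) - y1.length) - (P.length - y1.length))
      = ((y1 ++ (y2 ++ y3)).drop (y1.length + (P.length - y1.length))).take
          (min ((P.length + (2 * k + 1) - y1.length) - (P.length - y1.length))
            (y2.length - (P.length - y1.length))) := by
    conv_lhs => rw [hy2eq]
    rw [List.drop_take, List.drop_drop, List.take_take]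
  have hsub : ((y2.drop (P.length - y1.length)).take
        ((P.length + (2 * k + 1) - y1.length) - (P.length - y1.length))).Sublist
      (((y1 ++ (y2 ++ y3)).drop P.length).take (2 * k + 1)) := by
    rw [hM]
    apply slice_sublist
    · omega
    · have := min_le_left ((P.length + (2 * k + 1) - y1.length) - (P.length - y1.length))
        (y2.length - (P.length - y1.length))
      omega
  have hcount_sub := hsub.count_le (s i)
  have e : y2 = y2.take (P.length - y1.length)
      ++ ((y2.drop (P.length - y1.length)).take
            ((P.length + (2 * k + 1) - y1.length) - (P.length - y1.length))
          ++ (y2.drop (P.length - y1.length)).drop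
            ((P.length + (2 * k + 1) - y1.length) - (P.length - y1.length))) := by
    rw [List.take_append_drop, List.take_append_drop]
  have hcy2 : y2.count (s i) = (y2.take (P.length - y1.length)).count (s i)
      + ((y2.drop (P.length - y1.length)).take
          ((P.length + (2 * k + 1) - y1.length) - (P.length - y1.length))).count (s i)
      + ((y2.drop (P.length - y1.length)).drop
          ((P.length + (2 * k + 1) - y1.length) - (P.length - y1.length))).count (s i) := by
    conv_lhs => rw [e]
    rw [List.count_append, List.count_append]
    omega
  have hA1 : (y2.take (P.length - y1.length)).count (s i) ≤ P.length - y1.length :=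
    (List.count_le_length).trans (by simp)
  have hA3 : ((y2.drop (P.length - y1.length)).drop
        ((P.length + (2 * k + 1) - y1.length) - (P.length - y1.length))).count (s i)
      ≤ y2.length - (P.length - y1.length)
        - ((P.length + (2 * k + 1) - y1.length) - (P.length - y1.length)) := by
    refine (List.count_le_length).trans ?_
    simp only [List.length_drop]
    omega
  omega
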